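/- Let d ≥ 3 and let D be a dihedral group of order 2^d. Then the W-algebra W[[t]]/(p_d(t)·(t − 2), 2·p_d(t)) is isomorphic to a subquotient algebra of the group algebra WD: there exist a W-subalgebra S of WD and an ideal J of S such that S/J is isomorphic to W[[t]]/(p_d(t)(t − 2), 2p_d(t)) as a W-algebra. -/

import Mathlib

instance : Fact (Nat.Prime 2) := ⟨Nat.prime_two⟩

/-- The polynomials `q_ℓ ∈ ℤ[t]` defined by `q_2 = t` and `q_ℓ = q_{ℓ-1}^2 - 2` for `ℓ ≥ 3`. -/
noncomputable def qPoly : ℕ → Polynomial ℤ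
  | 0 => Polynomial.X
  | 1 => Polynomial.X
  | 2 => Polynomial.X
  | (n + 3) => qPoly (n + 2) ^ 2 - 2

/-- The polynomial `p_d = ∏_{ℓ=2}^{d-1} q_ℓ ∈ ℤ[t]`. -/
noncomputable def pPoly (d : ℕ) : Polynomial ℤ :=
  ∏ ℓ ∈ Finset.Icc 2 (d - 1), qPoly ℓ

/-- The image of `p_d` in `W[[t]]`. -/
noncomputable def pPowerSeries (k : Type*) [CommRing k] (d : ℕ) :
    PowerSeries (WittVector 2 k) :=
  Polynomial.aeval (PowerSeries.X : PowerSeries (WittVector 2 k)) (pPoly d)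

universe u

namespace WittAux

variable {k : Type*} [Field k] [IsAlgClosed k] [CharP k 2]

local notation "W" => WittVector 2 k


set_option linter.unusedSectionVars false

lemma coeff_two_mul (y : W) : (2 * y).coeff 0 = 0 ∧ ∀ i, (2 * y).coeff (i+1) = (y.coeff i)^2 := by
  have h : (2 : W) * y = WittVector.verschiebung (WittVector.frobenius y) := by
    rw [WittVector.verschiebung_frobenius, mul_comm]; norm_num
  constructor
  · rw [h, WittVector.verschiebung_coeff_zero]
  · intro i
    rw [h, WittVector.verschiebung_coeff_add_one, WittVector.coeff_frobenius_charP]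

lemma coeff_pow_two_mul (m : ℕ) (y : W) : ∀ i < m, ((2^m : W) * y).coeff i = 0 := by
  induction m generalizing y with
  | zero => intro i hi; omega
  | succ m ih =>
    intro i hi
    have : (2^(m+1) : W) * y = 2 * ((2^m : W) * y) := by ring
    rw [this]
    rcases i with _ | i
    · exact (coeff_two_mul _).1
    · rw [(coeff_two_mul _).2 i, ih y i (by omega), zero_pow two_ne_zero]

lemma pow_two_dvd_of_coeff_zero (m : ℕ) (x : W) (h : ∀ i < m, x.coeff i = 0) :
    (2^m : W) ∣ x := by
  induction m generalizing x with
  | zero => simpa using Dvd.intro x rfl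
  | succ m ih =>
    have h0 : x.coeff 0 = 0 := h 0 (by omega)
    obtain ⟨y, hy⟩ := (WittVector.frobenius_bijective 2 k).2
      (WittVector.mk 2 fun i => x.coeff (i+1))
    have hvz : x = 2 * y := by
      have : x = WittVector.verschiebung (WittVector.mk 2 fun i => x.coeff (i+1)) := by
        ext i
        rcases i with _ | i
        · rw [WittVector.verschiebung_coeff_zero, h0]
        · rw [WittVector.verschiebung_coeff_add_one, WittVector.coeff_mk]
      rw [this, ← hy, WittVector.verschiebung_frobenius, mul_comm]; norm_num
    have hyc : ∀ i < m, y.coeff i = 0 := by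
      intro i hi
      have h1 : (WittVector.frobenius y).coeff i = 0 := by
        rw [hy, WittVector.coeff_mk]; exact h (i+1) (by omega)
      rw [WittVector.coeff_frobenius_charP] at h1
      exact pow_eq_zero_iff (two_ne_zero) |>.mp h1
    obtain ⟨w, hw⟩ := ih y hyc
    exact ⟨w, by rw [hvz, hw, pow_succ]; ring⟩

lemma pow_two_dvd_iff (m : ℕ) (x : W) :
    (2^m : W) ∣ x ↔ ∀ i < m, x.coeff i = 0 := by
  constructor
  · rintro ⟨y, rfl⟩; exact coeff_pow_two_mul m y
  · exact pow_two_dvd_of_coeff_zero m x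

lemma dvd_of_truncate_eq {m : ℕ} {a b : W} (h : WittVector.truncate m a = WittVector.truncate m b) :
    (2^m : W) ∣ a - b := by
  apply pow_two_dvd_of_coeff_zero
  intro i hi
  have : (WittVector.truncate m (a - b)).coeff ⟨i, hi⟩ = 0 := by
    rw [map_sub, h, sub_self]; simp
  rwa [WittVector.coeff_truncate] at this

lemma truncate_eq_of_dvd {m : ℕ} {a b : W} (h : (2^m : W) ∣ a - b) :
    WittVector.truncate m a = WittVector.truncate m b := by
  have hc := (pow_two_dvd_iff m _).mp h
  rw [← sub_eq_zero, ← map_sub]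
  ext i
  rw [WittVector.coeff_truncate]
  simpa using hc i i.2

lemma coeff_eq_of_dvd {a b : W} {m : ℕ} (h : (2^m : W) ∣ a - b) :
    ∀ i < m, a.coeff i = b.coeff i := by
  intro i hi
  have h2 := truncate_eq_of_dvd h
  have := congrArg (fun t => TruncatedWittVector.coeff ⟨i, hi⟩ t) h2
  simpa [WittVector.coeff_truncate] using this

/-- 2-adic completeness of Witt vectors. -/
lemma witt_complete (F : ℕ → W) (hF : ∀ m, (2^m : W) ∣ F (m+1) - F m) :
    ∃ L : W, ∀ m, (2^m : W) ∣ L - F m := by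
  have key : ∀ m m', m ≤ m' → (2^m : W) ∣ F m' - F m := by
    intro m m' h
    induction m' with
    | zero =>
      have : m = 0 := by omega
      subst this; simp
    | succ m' ih =>
      rcases Nat.lt_or_ge m (m'+1) with hlt | hge
      · have hm : m ≤ m' := by omega
        have : F (m'+1) - F m = (F (m'+1) - F m') + (F m' - F m) := by ring
        rw [this]
        exact dvd_add (dvd_trans (pow_dvd_pow 2 hm) (hF m')) (ih hm)
      · have : m = m' + 1 := by omega
        subst this; simp
  refine ⟨WittVector.mk 2 (fun i => (F (i+1)).coeff i), ?_⟩
  intro m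
  apply pow_two_dvd_of_coeff_zero
  intro i hi
  have htr : WittVector.truncate m (WittVector.mk 2 (fun i => (F (i+1)).coeff i))
      = WittVector.truncate m (F m) := by
    ext j
    rw [WittVector.coeff_truncate, WittVector.coeff_truncate, WittVector.coeff_mk]
    exact (coeff_eq_of_dvd (key (j+1) m (by omega)) j (by omega)).symm
  have := dvd_of_truncate_eq htr
  exact (pow_two_dvd_iff m _).mp this i hi

lemma eq_zero_of_forall_pow_dvd (x : W) (h : ∀ m, (2^m : W) ∣ x) : x = 0 := by
  ext i
  have := (pow_two_dvd_iff (i+1) x).mp (h (i+1)) i (by omega)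
  rw [this]
  simp

end WittAux

namespace PolyAux

open Polynomial

lemma qPoly_monic_natDegree : ∀ j : ℕ, (qPoly (j+2)).Monic ∧ (qPoly (j+2)).natDegree = 2^j := by
  intro j
  induction j with
  | zero => exact ⟨monic_X, natDegree_X⟩
  | succ j ih =>
    have h1 : qPoly (j+3) = qPoly (j+2)^2 - 2 := by rw [qPoly]
    have hm : (qPoly (j+2)^2).Monic := ih.1.pow 2
    have hd : (qPoly (j+2)^2).natDegree = 2^(j+1) := by
      rw [ih.1.natDegree_pow, ih.2]; ring
    have hdeg : (qPoly (j+2)^2).degree = (2^(j+1) : ℕ) := by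
      rw [Polynomial.degree_eq_natDegree hm.ne_zero, hd]
    have hlt : (-2 : Polynomial ℤ).degree < (qPoly (j+2)^2).degree := by
      rw [hdeg]
      calc (-2 : Polynomial ℤ).degree ≤ 0 := by
            simpa using degree_intCast_le (-2 : ℤ)
        _ < (2^(j+1) : ℕ) := by
            exact_mod_cast WithBot.coe_lt_coe.mpr (by positivity)
  -- fix: 0 < 2^(j+1)
    constructor
    · rw [h1, sub_eq_add_neg]
      exact hm.add_of_left hlt
    · rw [h1, sub_eq_add_neg, natDegree_add_eq_left_of_degree_lt hlt, hd]

lemma qPoly_monic (ℓ : ℕ) (h : 2 ≤ ℓ) : (qPoly ℓ).Monic := by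
  obtain ⟨j, rfl⟩ : ∃ j, ℓ = j + 2 := ⟨ℓ - 2, by omega⟩
  exact (qPoly_monic_natDegree j).1

lemma pPoly_monic (d : ℕ) : (pPoly d).Monic :=
  monic_prod_of_monic _ _ fun ℓ hℓ => qPoly_monic ℓ (Finset.mem_Icc.mp hℓ).1

lemma pPoly_natDegree (d : ℕ) (hd : 3 ≤ d) : (pPoly d).natDegree = 2^(d-2) - 1 := by
  have key : ∀ m : ℕ, (pPoly (m+3)).natDegree = 2^(m+1) - 1 := by
    intro m
    induction m with
    | zero =>
      have : pPoly 3 = qPoly 2 := by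
        rw [pPoly]; norm_num
      rw [this]; simp [qPoly]
    | succ m ih =>
      have hstep : pPoly (m+4) = pPoly (m+3) * qPoly (m+4-1) := by
        rw [pPoly, pPoly, show m+4-1 = m+3 by omega, show m+3-1 = m+2 by omega,
          Finset.prod_Icc_succ_top (by omega : 2 ≤ m+3)]
      rw [hstep]
      rw [natDegree_mul (pPoly_monic _).ne_zero (qPoly_monic _ (by omega)).ne_zero]
      rw [ih, show m+4-1 = (m+1)+2 by omega, (qPoly_monic_natDegree (m+1)).2]
      have : (1:ℕ) ≤ 2^(m+1) := Nat.one_le_two_pow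
      omega
  obtain ⟨m, rfl⟩ : ∃ m, d = m + 3 := ⟨d - 3, by omega⟩
  rw [key m, show m+3-2 = m+1 by omega]

/-- mod 2 reduction -/
lemma qPoly_map_two (j : ℕ) :
    (qPoly (j+2)).map (Int.castRingHom (ZMod 2)) = X ^ (2^j) := by
  induction j with
  | zero => simp [qPoly]
  | succ j ih =>
    have h1 : qPoly (j+3) = qPoly (j+2)^2 - 2 := by rw [qPoly]
    rw [h1, Polynomial.map_sub, Polynomial.map_pow, ih]
    have h2 : ((2 : Polynomial ℤ).map (Int.castRingHom (ZMod 2))) = 0 := by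
      have : (2 : Polynomial ℤ) = Polynomial.C 2 := by norm_num
      have h0 : (Int.castRingHom (ZMod 2)) 2 = 0 := by decide
      rw [this, Polynomial.map_C, h0, Polynomial.C_0]
    rw [h2, sub_zero, ← pow_mul, pow_succ]

lemma pPoly_map_two (d : ℕ) (hd : 3 ≤ d) :
    (pPoly d).map (Int.castRingHom (ZMod 2)) = X ^ (2^(d-2) - 1) := by
  have key : ∀ m : ℕ, (pPoly (m+3)).map (Int.castRingHom (ZMod 2)) = X ^ (2^(m+1) - 1) := by
    intro m
    induction m with
    | zero =>
      have : pPoly 3 = qPoly 2 := by rw [pPoly]; norm_num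
      rw [this]; simp [qPoly]
    | succ m ih =>
      have hstep : pPoly (m+4) = pPoly (m+3) * qPoly (m+3) := by
        rw [pPoly, pPoly, show m+4-1 = m+3 by omega, Finset.prod_Icc_succ_top (by omega)]
        rw [show m+3-1 = m+2 by omega]
      rw [hstep, Polynomial.map_mul, ih, qPoly_map_two (m+1), ← pow_add]
      congr 1
      have : (1:ℕ) ≤ 2^(m+1) := Nat.one_le_two_pow
      have : (2:ℕ)^(m+2) = 2 * 2^(m+1) := by ring
      omega
  obtain ⟨m, rfl⟩ : ∃ m, d = m + 3 := ⟨d - 3, by omega⟩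
  rw [key m, show m+3-2 = m+1 by omega]

end PolyAux

namespace GrpAux

open Polynomial

variable {R : Type*} [CommRing R] {n : ℕ}

/-- the group-like element of the group algebra attached to `i : ZMod n`. -/
noncomputable def E (R : Type*) [CommRing R] (n : ℕ) (i : ZMod n) :
    MonoidAlgebra R (Multiplicative (ZMod n)) :=
  MonoidAlgebra.of R (Multiplicative (ZMod n)) (Multiplicative.ofAdd i)

lemma E_mul (i j : ZMod n) : E R n i * E R n j = E R n (i + j) := by
  rw [E, E, E, ← map_mul]; rfl

lemma E_zero : E R n 0 = 1 := by rw [E]; rfl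

/-- `x = E 1 + E (-1)`. -/
noncomputable def xElt (R : Type*) [CommRing R] (n : ℕ) :
    MonoidAlgebra R (Multiplicative (ZMod n)) := E R n 1 + E R n (-1)

lemma sq_aux (a : ZMod n) : (E R n a + E R n (-a))^2 = E R n (2*a) + E R n (-(2*a)) + 2 := by
  have h1 : E R n a * E R n (-a) = 1 := by rw [E_mul]; simp [E_zero]
  have h2 : E R n a ^ 2 = E R n (2*a) := by rw [sq, E_mul]; ring_nf
  have h3 : E R n (-a) ^ 2 = E R n (-(2*a)) := by rw [sq, E_mul]; ring_nf
  calc (E R n a + E R n (-a))^2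
      = E R n a ^2 + E R n (-a)^2 + 2 * (E R n a * E R n (-a)) := by ring
    _ = _ := by rw [h1, h2, h3]; ring

lemma q_eval (j : ℕ) :
    aeval (xElt R n) (qPoly (j+2)) = E R n ((2^j : ℕ)) + E R n (-((2^j : ℕ))) := by
  induction j with
  | zero => simp [qPoly, xElt]
  | succ j ih =>
    have h1 : qPoly (j+3) = qPoly (j+2)^2 - 2 := by rw [qPoly]
    rw [h1, map_sub, map_pow, ih]
    simp only [map_ofNat]
    have hc : ((2^(j+1) : ℕ) : ZMod n) = 2 * ((2^j : ℕ) : ZMod n) := by push_cast; ring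
    rw [sq_aux, hc]
    push_cast
    ring

lemma telescope (m : ℕ) :
    (E R n 1 - E R n (-1)) * ∏ ℓ ∈ Finset.Icc 2 (m+2), aeval (xElt R n) (qPoly ℓ) =
      E R n ((2^(m+1) : ℕ)) - E R n (-((2^(m+1) : ℕ))) := by
  induction m with
  | zero =>
    rw [show Finset.Icc 2 2 = {2} by rfl, Finset.prod_singleton]
    have := q_eval (R := R) (n := n) 0
    rw [show (0:ℕ)+2 = 2 by rfl] at this
    rw [this]
    have e1 : E R n 1 * E R n (-1) = 1 := by rw [E_mul]; simp [E_zero]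
    have e2 : E R n 1 * E R n 1 = E R n 2 := by rw [E_mul]; norm_num
    have e3 : E R n (-1) * E R n (-1) = E R n (-2) := by rw [E_mul]; ring_nf
    push_cast
    calc (E R n 1 - E R n (-1)) * (E R n 1 + E R n (-1))
        = E R n 1 * E R n 1 - E R n (-1) * E R n (-1) := by ring
      _ = E R n 2 - E R n (-2) := by rw [e2, e3]
  | succ m ih =>
    rw [Finset.prod_Icc_succ_top (by omega : 2 ≤ m + 3), ← mul_assoc, ih,
      show m + 3 = (m+1) + 2 by omega, q_eval]
    set a : ZMod n := ((2^(m+1) : ℕ) : ZMod n) with ha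
    have e2 : E R n a * E R n a = E R n (2*a) := by rw [E_mul]; ring_nf
    have e3 : E R n (-a) * E R n (-a) = E R n (-(2*a)) := by rw [E_mul]; ring_nf
    have hc : ((2^(m+2) : ℕ) : ZMod n) = 2 * a := by rw [ha]; push_cast; ring
    calc (E R n a - E R n (-a)) * (E R n a + E R n (-a))
        = E R n a * E R n a - E R n (-a) * E R n (-a) := by ring
      _ = E R n (2*a) - E R n (-(2*a)) := by rw [e2, e3]
      _ = _ := by rw [hc]

section K
variable {K : Type*} [Field K] [IsAlgClosed K] [CharZero K] [NeZero n]
set_option linter.unusedSectionVars false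

/-- the character of `ZMod n` attached to an `n`-th root of unity. -/
noncomputable def chi (u : Kˣ) (hu : u ^ n = 1) : Multiplicative (ZMod n) →* K where
  toFun g := ((u ^ (g.toAdd.val) : Kˣ) : K)
  map_one' := by
    show ((u ^ (ZMod.val (0 : ZMod n)) : Kˣ) : K) = 1
    rw [ZMod.val_zero]; simp
  map_mul' g h := by
    have key : ∀ m : ℕ, u ^ (m % n) = u ^ m := by
      intro m
      conv_rhs => rw [← Nat.mod_add_div m n, pow_add, pow_mul, hu, one_pow, mul_one]
    show ((u ^ ((g.toAdd + h.toAdd).val) : Kˣ) : K) = _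
    have : u ^ ((g.toAdd + h.toAdd).val) = u ^ (g.toAdd.val) * u ^ (h.toAdd.val) := by
      rw [ZMod.val_add, key, pow_add]
    rw [this, Units.val_mul]

/-- the ring homomorphism on the group algebra attached to an `n`-th root of unity. -/
noncomputable def lam (φ : R →+* K) (u : Kˣ) (hu : u ^ n = 1) :
    MonoidAlgebra R (Multiplicative (ZMod n)) →+* K :=
  MonoidAlgebra.liftNCRingHom φ (chi u hu) (fun _ _ => Commute.all _ _)

lemma lam_single (φ : R →+* K) (u : Kˣ) (hu : u ^ n = 1) (g : Multiplicative (ZMod n)) (r : R) :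
    lam φ u hu (MonoidAlgebra.single g r) = φ r * chi u hu g :=
  MonoidAlgebra.liftNC_single _ _ _ _

lemma lam_aeval (φ : R →+* K) (u : Kˣ) (hu : u ^ n = 1) (g : R[X]) (hn : 1 < n) :
    lam φ u hu (aeval (xElt R n) g) = eval₂ φ (((u:K) + ((u⁻¹ : Kˣ):K))) g := by
  rw [aeval_def, hom_eval₂]
  have hcomp : (lam φ u hu).comp (algebraMap R (MonoidAlgebra R (Multiplicative (ZMod n)))) = φ := by
    ext r
    rw [RingHom.comp_apply]
    have : algebraMap R (MonoidAlgebra R (Multiplicative (ZMod n))) r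
        = MonoidAlgebra.single 1 r := by
      rw [MonoidAlgebra.coe_algebraMap]; simp
    rw [this, lam_single, map_one, mul_one]
  have harg : lam φ u hu (xElt R n) = (u:K) + ((u⁻¹ : Kˣ):K) := by
    haveI : Fact (1 < n) := ⟨hn⟩
    rw [xElt, map_add]
    have h1 : lam φ u hu (E R n 1) = (u : K) := by
      rw [E, MonoidAlgebra.of_apply, lam_single, map_one, one_mul]
      show ((u ^ (ZMod.val (1 : ZMod n)) : Kˣ) : K) = _
      rw [ZMod.val_one n, pow_one]
    have h2 : lam φ u hu (E R n (-1)) = ((u⁻¹ : Kˣ) : K) := by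
      rw [E, MonoidAlgebra.of_apply, lam_single, map_one, one_mul]
      show ((u ^ (ZMod.val (-1 : ZMod n)) : Kˣ) : K) = _
      obtain ⟨m, rfl⟩ : ∃ m, n = m + 1 := ⟨n - 1, by omega⟩
      rw [ZMod.val_neg_one m]
      congr 1
      calc u ^ m = u ^ m * (u * u⁻¹) := by rw [mul_inv_cancel, mul_one]
        _ = u ^ (m+1) * u⁻¹ := by rw [← mul_assoc, ← pow_succ]
        _ = u⁻¹ := by rw [hu, one_mul]
    rw [h1, h2]
  rw [hcomp, harg]

/-- injectivity of `a ↦ ζ^a + ζ^{-a}` for `a ≤ c` where `n = 2c`. -/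
lemma root_inj {ζ : Kˣ} (hζ : IsPrimitiveRoot (ζ : K) n) {c : ℕ} (hn : n = 2 * c) (hc : 0 < c) :
    Function.Injective
      (fun a : Fin (c+1) => ((ζ ^ (a:ℕ) : Kˣ) : K) + (((ζ ^ (a:ℕ))⁻¹ : Kˣ) : K)) := by
  intro a b hab
  simp only at hab
  set z : K := ((ζ ^ (a:ℕ) : Kˣ) : K) with hz
  set w : K := ((ζ ^ (b:ℕ) : Kˣ) : K) with hw
  have hz0 : z ≠ 0 := Units.ne_zero _
  have hw0 : w ≠ 0 := Units.ne_zero _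
  have hzi : (((ζ ^ (a:ℕ))⁻¹ : Kˣ) : K) = z⁻¹ := by
    rw [hz]; exact (Units.val_inv_eq_inv_val _)
  have hwi : (((ζ ^ (b:ℕ))⁻¹ : Kˣ) : K) = w⁻¹ := by
    rw [hw]; exact (Units.val_inv_eq_inv_val _)
  rw [hzi, hwi] at hab
  have key : (z - w) * (z * w - 1) = 0 := by
    have h1 : z * z⁻¹ = 1 := mul_inv_cancel₀ hz0
    have h2 : w * w⁻¹ = 1 := mul_inv_cancel₀ hw0
    have h3 := congrArg (fun t => t * (z * w)) hab
    calc (z - w) * (z * w - 1) = (z + z⁻¹) * (z*w) - (w + w⁻¹) * (z*w)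
          - (z*z⁻¹) * w + (w * w⁻¹) * z - z + w := by ring
      _ = 0 := by rw [h3, h1, h2]; ring
  rcases mul_eq_zero.mp key with h | h
  · have heq : (ζ:K) ^ (a:ℕ) = (ζ:K) ^ (b:ℕ) := by
      have := sub_eq_zero.mp h
      rw [hz, hw] at this; push_cast at this; exact this
    have ha := a.2
    have hb := b.2
    exact Fin.ext (hζ.pow_inj (by omega) (by omega) heq)
  · have hzw : (ζ:K) ^ ((a:ℕ) + (b:ℕ)) = 1 := by
      have h4 := sub_eq_zero.mp h
      rw [pow_add]
      rw [hz, hw] at h4; push_cast at h4; exact h4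
    have hdvd : n ∣ (a:ℕ) + (b:ℕ) := hζ.dvd_of_pow_eq_one _ hzw
    have ha := a.2
    have hb := b.2
    obtain ⟨e, he⟩ := hdvd
    rcases Nat.eq_zero_or_pos e with rfl | hep
    · rw [Nat.mul_zero] at he
      exact Fin.ext (by omega)
    · have hne : n ≤ n * e := Nat.le_mul_of_pos_right n hep
      exact Fin.ext (by omega)

end K

open Polynomial

/-- the minimal polynomial `(X^2-4) p_d` over ℤ. -/
noncomputable def mZ (d : ℕ) : Polynomial ℤ := ((X : Polynomial ℤ)^2 - C 4) * pPoly d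

lemma vsq (R : Type*) [CommRing R] (n : ℕ) :
    xElt R n ^ 2 - 4 = (E R n 1 - E R n (-1))^2 := by
  have h1 : E R n 1 * E R n (-1) = 1 := by rw [E_mul]; simp [E_zero]
  have h2 : E R n 1 * E R n 1 = E R n 2 := by rw [E_mul]; norm_num
  have h3 : E R n (-1) * E R n (-1) = E R n (-2) := by rw [E_mul]; ring_nf
  rw [xElt]
  calc (E R n 1 + E R n (-1))^2 - 4
      = E R n 1 * E R n 1 + E R n (-1) * E R n (-1) + 2*(E R n 1 * E R n (-1)) - 4 := by ring
    _ = E R n 2 + E R n (-2) - 2 := by rw [h1, h2, h3]; ring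
    _ = E R n 1 * E R n 1 + E R n (-1) * E R n (-1) - 2*(E R n 1 * E R n (-1)) := by
        rw [h1, h2, h3]; ring
    _ = _ := by ring

lemma aeval_mZ_zero (R : Type*) [CommRing R] (d : ℕ) (hd : 3 ≤ d) :
    aeval (xElt R (2^(d-1))) (mZ d) = 0 := by
  set n := 2^(d-1) with hn
  rw [mZ, map_mul]
  have hp : (aeval (xElt R n)) (pPoly d) = ∏ ℓ ∈ Finset.Icc 2 (d-1), aeval (xElt R n) (qPoly ℓ) := by
    rw [pPoly, map_prod]
  have hm : (aeval (xElt R n)) ((X : Polynomial ℤ)^2 - C 4) = xElt R n ^ 2 - 4 := by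
    rw [map_sub, map_pow, aeval_X, aeval_C]
    norm_num
  rw [hp, hm, vsq]
  have htel := telescope (R := R) (n := n) (d-3)
  rw [show (d-3)+2 = d-1 by omega] at htel
  have hcc : ((2^((d-3)+1) : ℕ) : ZMod n) = -((2^((d-3)+1) : ℕ) : ZMod n) := by
    have h2 : ((2^((d-3)+1) : ℕ) : ZMod n) + ((2^((d-3)+1) : ℕ) : ZMod n) = 0 := by
      have : (2^((d-3)+1) : ℕ) + 2^((d-3)+1) = n := by
        rw [hn]
        have : d - 1 = ((d-3)+1) + 1 := by omega
        rw [this, pow_succ]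
        ring
      rw [← Nat.cast_add, this, ZMod.natCast_self]
    linear_combination h2
  calc (E R n 1 - E R n (-1))^2 * ∏ ℓ ∈ Finset.Icc 2 (d-1), aeval (xElt R n) (qPoly ℓ)
      = (E R n 1 - E R n (-1)) *
        ((E R n 1 - E R n (-1)) * ∏ ℓ ∈ Finset.Icc 2 (d-1), aeval (xElt R n) (qPoly ℓ)) := by ring
    _ = (E R n 1 - E R n (-1)) *
        (E R n ((2^((d-3)+1):ℕ)) - E R n (-((2^((d-3)+1):ℕ)))) := by rw [htel]
    _ = 0 := by rw [← hcc]; ring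

section Kernel

variable {R : Type*} [CommRing R] [IsDomain R]
variable {K : Type*} [Field K] [IsAlgClosed K] [CharZero K]

lemma mZ_monic (d : ℕ) (hd : 3 ≤ d) : (mZ d).Monic :=
  (monic_X_pow_sub_C (4:ℤ) two_ne_zero).mul (PolyAux.pPoly_monic d)

lemma mZ_natDegree (d : ℕ) (hd : 3 ≤ d) : (mZ d).natDegree = 2^(d-2) + 1 := by
  rw [mZ, natDegree_mul (monic_X_pow_sub_C (4:ℤ) two_ne_zero).ne_zero (PolyAux.pPoly_monic d).ne_zero,
    natDegree_X_pow_sub_C, PolyAux.pPoly_natDegree d hd]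
  have : (1:ℕ) ≤ 2^(d-2) := Nat.one_le_two_pow
  omega

/-- main kernel lemma: any polynomial vanishing at `xElt` is divisible by `mZ`. -/
lemma dvd_of_aeval_eq_zero (φ : R →+* K) (hφ : Function.Injective φ)
    (d : ℕ) (hd : 3 ≤ d) (g : R[X])
    (hg : aeval (xElt R (2^(d-1))) g = 0) :
    (mZ d).map (Int.castRingHom R) ∣ g := by
  set n := 2^(d-1) with hn
  haveI : NeZero n := ⟨by positivity⟩
  set c := 2^(d-2) with hc
  have hnc : n = 2 * c := by rw [hn, hc, ← pow_succ']; congr 1; omega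
  set mR : R[X] := (mZ d).map (Int.castRingHom R) with hmR
  have hmRmonic : mR.Monic := (mZ_monic d hd).map _
  have hmRdeg : mR.natDegree = c + 1 := by
    rw [hmR, (mZ_monic d hd).natDegree_map, mZ_natDegree d hd]
  -- remainder
  set rem := g %ₘ mR with hrem
  have hremval : aeval (xElt R n) rem = 0 := by
    have hdiv : g = mR * (g /ₘ mR) + rem := (modByMonic_add_div g mR).symm.trans (by ring)
    have hmval : aeval (xElt R n) mR = 0 := by
      rw [hmR, ← algebraMap_int_eq, aeval_map_algebraMap]
      exact aeval_mZ_zero R d hd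
    rw [hdiv, map_add, map_mul, hmval, zero_mul, zero_add] at hg
    exact hg
  have hremdeg : rem.natDegree < c + 1 := by
    have hlt := degree_modByMonic_lt g hmRmonic
    rw [← hrem, degree_eq_natDegree hmRmonic.ne_zero, hmRdeg] at hlt
    rcases eq_or_ne rem 0 with h0 | h0
    · rw [h0]; simpa using Nat.succ_pos c
    · exact (natDegree_lt_iff_degree_lt h0).mpr hlt
  -- roots of unity
  have hnpos : 0 < n := by positivity
  haveI : NeZero (n : K) := ⟨Nat.cast_ne_zero.mpr hnpos.ne'⟩
  obtain ⟨ζ, hζ⟩ := HasEnoughRootsOfUnity.exists_primitiveRoot K n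
  have hζn : IsPrimitiveRoot ζ n := hζ
  have hζu : IsUnit ζ := hζn.isUnit hnpos.ne'
  set ζu : Kˣ := hζu.unit with hζudef
  have hζuval : (ζu : K) = ζ := hζu.unit_spec
  have hζun : ζu ^ n = 1 := by
    ext
    push_cast [hζuval]
    exact hζn.pow_eq_one
  -- evaluate
  have heval : ∀ a : Fin (c+1),
      ((rem.map φ).eval (((ζu ^ (a:ℕ) : Kˣ) : K) + (((ζu ^ (a:ℕ))⁻¹ : Kˣ) : K))) = 0 := by
    intro a
    have hu : (ζu ^ (a:ℕ)) ^ n = 1 := by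
      rw [← pow_mul, mul_comm, pow_mul, hζun, one_pow]
    have hn1 : 1 < n := by
      rw [hn]
      calc 1 < 2^1 := by norm_num
        _ ≤ 2^(d-1) := Nat.pow_le_pow_right (by norm_num) (by omega)
    have := lam_aeval φ (ζu ^ (a:ℕ)) hu rem hn1
    rw [hremval, map_zero] at this
    rw [eval_map]
    exact this.symm
  have hinj := root_inj (K := K) (by rwa [hζuval]) hnc (by positivity)
  have hmapz : rem.map φ = 0 := by
    apply eq_zero_of_natDegree_lt_card_of_eval_eq_zero _ hinj heval
    calc (rem.map φ).natDegree ≤ rem.natDegree := natDegree_map_le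
      _ < c + 1 := hremdeg
      _ = Fintype.card (Fin (c+1)) := by simp
  have hremz : rem = 0 := by
    rwa [Polynomial.map_eq_zero_iff hφ] at hmapz
  rwa [← modByMonic_eq_zero_iff_dvd hmRmonic]
  
end Kernel
end GrpAux

section PS

open Polynomial

namespace PSAux

lemma fZ_eq (d : ℕ) (hd : 3 ≤ d) :
    ∃ w : Polynomial ℤ, Polynomial.X * pPoly d = X ^ (2^(d-2)) + 2 * w ∧ w.natDegree < 2^(d-2) := by
  set c := 2^(d-2) with hc
  have hc1 : 1 ≤ c := Nat.one_le_two_pow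
  set fZ : Polynomial ℤ := X * pPoly d with hfZ
  have hfm : fZ.Monic := monic_X.mul (PolyAux.pPoly_monic d)
  have hfd : fZ.natDegree = c := by
    rw [hfZ, natDegree_mul X_ne_zero (PolyAux.pPoly_monic d).ne_zero, natDegree_X,
      PolyAux.pPoly_natDegree d hd]
    omega
  have hmap : (fZ - X^c).map (Int.castRingHom (ZMod 2)) = 0 := by
    rw [Polynomial.map_sub, Polynomial.map_mul, Polynomial.map_pow, Polynomial.map_X,
      PolyAux.pPoly_map_two d hd, ← pow_succ']
    rw [show 2^(d-2) - 1 + 1 = c by omega]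
    simp
  have hdvd : Polynomial.C (2:ℤ) ∣ (fZ - X^c) := by
    rw [C_dvd_iff_dvd_coeff]
    intro i
    have := congrArg (fun q => Polynomial.coeff q i) hmap
    simp only [Polynomial.coeff_map, Polynomial.coeff_zero] at this
    exact_mod_cast (ZMod.intCast_zmod_eq_zero_iff_dvd _ 2).mp this
  obtain ⟨w, hw⟩ := hdvd
  have hC2 : Polynomial.C (2:ℤ) = 2 := by norm_num
  refine ⟨w, by rw [← hC2, ← hw]; ring, ?_⟩
  have hco : ∀ m, c ≤ m → (fZ - X^c).coeff m = 0 := by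
    intro m hm
    rcases eq_or_lt_of_le hm with rfl | hlt
    · rw [Polynomial.coeff_sub, Polynomial.coeff_X_pow, if_pos rfl, ← hfd, hfm.coeff_natDegree,
        sub_self]
    · rw [Polynomial.coeff_sub, Polynomial.coeff_X_pow, if_neg (by omega),
        Polynomial.coeff_eq_zero_of_natDegree_lt (by omega : fZ.natDegree < m), sub_zero]
  rcases eq_or_ne w 0 with rfl | hw0
  · rw [natDegree_zero]; omega
  by_contra hcon
  push_neg at hcon
  have : (fZ - X^c).coeff w.natDegree = 0 := hco _ hcon
  rw [hw] at this
  simp only [Polynomial.coeff_C_mul] at this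
  have : w.coeff w.natDegree = 0 := by omega
  exact hw0 (Polynomial.leadingCoeff_eq_zero.mp this)

variable {k : Type u} [Field k] [IsAlgClosed k] [CharP k 2]

local notation "W" => WittVector 2 k
local notation "A" => PowerSeries (WittVector 2 k)

/-- the canonical algebra map from polynomials to power series, as `aeval X`. -/
noncomputable def theta : Polynomial (WittVector 2 k) →ₐ[WittVector 2 k] A :=
  Polynomial.aeval PowerSeries.X

lemma theta_coeff (p : Polynomial W) (i : ℕ) :
    PowerSeries.coeff i (theta (k := k) p) = p.coeff i := by
  have h : theta (k := k) = Polynomial.coeToPowerSeries.algHom (WittVector 2 k) := by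
    apply Polynomial.algHom_ext
    simp [theta, Polynomial.coeToPowerSeries.algHom_apply]
  rw [h, Polynomial.coeToPowerSeries.algHom_apply]
  simp [Polynomial.coeff_coe]

/-- the shift-by-c operator. -/
noncomputable def sh (c : ℕ) (G : A) : A :=
  PowerSeries.mk fun i => PowerSeries.coeff (i + c) G

lemma decomp (c : ℕ) (G : A) :
    G = theta (PowerSeries.trunc c G) + PowerSeries.X ^ c * sh c G := by
  ext j
  rw [map_add, theta_coeff, PowerSeries.coeff_trunc, PowerSeries.coeff_X_pow_mul']
  rcases lt_or_ge j c with h | h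
  · rw [if_pos h, if_neg (by omega)]
    ring
  · rw [if_neg (by omega), if_pos h, sh, PowerSeries.coeff_mk, Nat.sub_add_cancel h]
    ring

variable (d : ℕ)

/-- the approximation sequences for Weierstrass-type division. -/
noncomputable def PP (c : ℕ) (wps : A) : ℕ → A → Polynomial W
  | 0, _ => 0
  | (m+1), G => PowerSeries.trunc c G - 2 * PP c wps m (wps * sh c G)

noncomputable def QQ (c : ℕ) (wps : A) : ℕ → A → A
  | 0, _ => 0
  | (m+1), G => sh c G - 2 * QQ c wps m (wps * sh c G)

lemma PP_coeff_high (c : ℕ) (wps : A) (m : ℕ) (G : A) (i : ℕ) (hi : c ≤ i) :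
    (PP c wps m G).coeff i = 0 := by
  induction m generalizing G with
  | zero => simp [PP]
  | succ m ih =>
    rw [PP, Polynomial.coeff_sub, PowerSeries.coeff_trunc, if_neg (by omega)]
    have : (2 * PP c wps m (wps * sh c G)).coeff i = 0 := by
      have h2 : (2 : Polynomial W) = Polynomial.C 2 := (map_ofNat _ 2).symm
      rw [h2, Polynomial.coeff_C_mul, ih, mul_zero]
    rw [this, sub_zero]

lemma approx (c : ℕ) (wps : A) (F : A) (hF : F = PowerSeries.X ^ c + 2 * wps) :
    ∀ m G, ∃ r : A, G - theta (PP c wps m G) - QQ c wps m G * F = (2^m : A) * r := by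
  intro m
  induction m with
  | zero =>
    intro G
    exact ⟨G, by simp [PP, QQ]⟩
  | succ m ih =>
    intro G
    obtain ⟨r', hr'⟩ := ih (wps * sh c G)
    refine ⟨-r', ?_⟩
    rw [PP, QQ, map_sub, map_mul]
    have h2 : theta (k := k) (2 : Polynomial W) = 2 := by
      have hC : (2 : Polynomial W) = Polynomial.C 2 := (map_ofNat _ 2).symm
      rw [hC, theta, Polynomial.aeval_C]
      exact (map_ofNat _ 2)
    rw [h2]
    linear_combination decomp c G - sh c G * hF - 2 * hr'

lemma cohP (c : ℕ) (wps : A) :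
    ∀ m G, ∃ rp : Polynomial W, PP c wps (m+1) G - PP c wps m G = 2^m * rp := by
  intro m
  induction m with
  | zero => intro G; exact ⟨PP c wps 1 G - PP c wps 0 G, by ring⟩
  | succ m ih =>
    intro G
    obtain ⟨rp, hrp⟩ := ih (wps * sh c G)
    refine ⟨-rp, ?_⟩
    show PP c wps (m+2) G - PP c wps (m+1) G = _
    rw [PP, PP]
    calc PowerSeries.trunc c G - 2 * PP c wps (m+1) (wps * sh c G)
        - (PowerSeries.trunc c G - 2 * PP c wps m (wps * sh c G))
        = -2 * (PP c wps (m+1) (wps * sh c G) - PP c wps m (wps * sh c G)) := by ring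
      _ = _ := by rw [hrp]; ring

lemma cohQ (c : ℕ) (wps : A) :
    ∀ m G, ∃ rq : A, QQ c wps (m+1) G - QQ c wps m G = 2^m * rq := by
  intro m
  induction m with
  | zero => intro G; exact ⟨QQ c wps 1 G - QQ c wps 0 G, by ring⟩
  | succ m ih =>
    intro G
    obtain ⟨rq, hrq⟩ := ih (wps * sh c G)
    refine ⟨-rq, ?_⟩
    show QQ c wps (m+2) G - QQ c wps (m+1) G = _
    rw [QQ, QQ]
    calc sh c G - 2 * QQ c wps (m+1) (wps * sh c G)
        - (sh c G - 2 * QQ c wps m (wps * sh c G))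
        = -2 * (QQ c wps (m+1) (wps * sh c G) - QQ c wps m (wps * sh c G)) := by ring
      _ = _ := by rw [hrq]; ring

lemma coeff_two_pow_mul_ps (m : ℕ) (r : A) (j : ℕ) :
    PowerSeries.coeff j ((2^m : A) * r)
      = (2^m : W) * PowerSeries.coeff j r := by
  have h2 : (2 : A) = PowerSeries.C 2 := (map_ofNat _ 2).symm
  rw [h2, ← map_pow, PowerSeries.coeff_C_mul]

lemma coeff_two_pow_mul_poly (m : ℕ) (r : Polynomial W) (j : ℕ) :
    ((2^m : Polynomial W) * r).coeff j = (2^m : W) * r.coeff j := by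
  have h2 : (2 : Polynomial W) = Polynomial.C 2 := (map_ofNat _ 2).symm
  rw [h2, ← map_pow, Polynomial.coeff_C_mul]

/-- Key division lemma: every power series is a polynomial modulo `F`. -/
lemma exists_div (c : ℕ) (hc : 0 < c) (wps : A) (F : A) (hF : F = PowerSeries.X ^ c + 2 * wps)
    (G : A) : ∃ (PL : Polynomial W) (QL : A), G = theta PL + QL * F := by
  classical
  -- limits of the P coefficients
  have hPc : ∀ i : ℕ, ∃ Li : W, ∀ m, (2^m : W) ∣ Li - (PP c wps m G).coeff i := by
    intro i
    apply WittAux.witt_complete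
    intro m
    obtain ⟨rp, hrp⟩ := cohP c wps m G
    have := congrArg (fun q => Polynomial.coeff q i) hrp
    simp only [Polynomial.coeff_sub] at this
    rw [coeff_two_pow_mul_poly] at this
    exact ⟨rp.coeff i, this⟩
  have hQc : ∀ i : ℕ, ∃ Mi : W, ∀ m, (2^m : W) ∣ Mi - PowerSeries.coeff i (QQ c wps m G) := by
    intro i
    apply WittAux.witt_complete
    intro m
    obtain ⟨rq, hrq⟩ := cohQ c wps m G
    have := congrArg (fun q => PowerSeries.coeff i q) hrq
    simp only [map_sub] at this
    rw [coeff_two_pow_mul_ps] at this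
    exact ⟨PowerSeries.coeff i rq, this⟩
  choose L hL using hPc
  choose M hM using hQc
  set PL : Polynomial W := ∑ i ∈ Finset.range c, Polynomial.monomial i (L i) with hPL
  set QL : A := PowerSeries.mk M with hQL
  have hPLcoeff : ∀ j, PL.coeff j = if j < c then L j else 0 := by
    intro j
    rw [hPL, Polynomial.finset_sum_coeff]
    rcases lt_or_ge j c with h | h
    · rw [Finset.sum_eq_single j]
      · rw [Polynomial.coeff_monomial, if_pos rfl, if_pos h]
      · intro b _ hb
        rw [Polynomial.coeff_monomial, if_neg hb]
      · intro hj
        exact absurd (Finset.mem_range.mpr h) hj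
    · rw [if_neg (by omega), Finset.sum_eq_zero]
      intro b hb
      rw [Polynomial.coeff_monomial, if_neg (by rw [Finset.mem_range] at hb; omega)]
  refine ⟨PL, QL, ?_⟩
  have key : ∀ j, PowerSeries.coeff j (G - theta PL - QL * F) = 0 := by
    intro j
    apply WittAux.eq_zero_of_forall_pow_dvd
    intro m
    obtain ⟨r, hr⟩ := approx c wps F hF m G
    have hsplit : G - theta PL - QL * F
        = (G - theta (PP c wps m G) - QQ c wps m G * F)
          + (theta (PP c wps m G) - theta PL) + (QQ c wps m G - QL) * F := by ring
    rw [hsplit, hr]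
    simp only [map_add, map_sub]
    apply dvd_add
    apply dvd_add
    · rw [coeff_two_pow_mul_ps]
      exact Dvd.intro _ rfl
    · rw [theta_coeff, theta_coeff]
      rcases lt_or_ge j c with h | h
      · rw [hPLcoeff, if_pos h]
        have := hL j m
        have hneg : (PP c wps m G).coeff j - L j = -(L j - (PP c wps m G).coeff j) := by ring
        rw [hneg]
        exact dvd_neg.mpr this
      · rw [hPLcoeff, if_neg (by omega), PP_coeff_high c wps m G j h, sub_zero]
        exact dvd_zero _
    · rw [PowerSeries.coeff_mul]
      apply Finset.dvd_sum
      intro x hx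
      apply dvd_mul_of_dvd_left
      rw [map_sub]
      have := hM x.1 m
      have hneg : PowerSeries.coeff x.1 (QQ c wps m G) - PowerSeries.coeff x.1 QL
          = -(M x.1 - PowerSeries.coeff x.1 (QQ c wps m G)) := by
        rw [hQL, PowerSeries.coeff_mk]; ring
      rw [hneg]
      exact dvd_neg.mpr this
  have h0 : G - theta PL - QL * F = 0 := by
    ext j
    rw [key j, map_zero]
  have h1 : G - (theta PL + QL * F) = 0 := by rw [← h0]; ring
  exact sub_eq_zero.mp h1

end PSAux

end PS
section Main

open Polynomial

variable {k : Type u} [Field k] [IsAlgClosed k] [CharP k 2]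

local notation "W" => WittVector 2 k

lemma wittCharZero : CharZero (WittVector 2 k) := by
  have hfact : ∀ m : ℕ, m ≠ 0 → (m : W) ≠ 0 := by
    intro m hm
    obtain ⟨a, u, hu2, hmu⟩ : ∃ a u : ℕ, ¬ (2 ∣ u) ∧ m = 2^a * u :=
      ⟨m.factorization 2, m / 2 ^ (m.factorization 2),
        Nat.not_dvd_ordCompl Nat.prime_two hm,
        (Nat.ordProj_mul_ordCompl_eq_self m 2).symm⟩
    have h2 : (2 : W) ≠ 0 := by
      have := WittVector.p_nonzero 2 k
      exact_mod_cast this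
    have huk : ((u : k)) ≠ 0 := by
      intro h
      exact hu2 ((CharP.cast_eq_zero_iff k 2 u).mp h)
    have huW : (u : W) ≠ 0 := by
      intro h
      apply huk
      have := congrArg (WittVector.constantCoeff (p := 2)) h
      simpa using this
    rw [hmu]
    push_cast
    exact mul_ne_zero (pow_ne_zero _ h2) huW
  haveI : CharP W 0 := by
    constructor
    intro x
    rw [zero_dvd_iff]
    constructor
    · intro hx
      by_contra hxne
      exact hfact x (by exact_mod_cast hxne) hx
    · rintro rfl
      simp
  exact CharP.charP_to_charZero W

theorem Rd_is_subquotient_of_dihedral_group_algebra'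
    (d : ℕ) (hd : 3 ≤ d) :
    ∃ (B : Type u) (_ : Ring B) (_ : Algebra (WittVector 2 k) B)
      (ι : B →ₐ[WittVector 2 k]
        MonoidAlgebra (WittVector 2 k) (DihedralGroup (2 ^ (d - 1))))
      (π : B →ₐ[WittVector 2 k]
        (PowerSeries (WittVector 2 k) ⧸
          Ideal.span {pPowerSeries k d * (PowerSeries.X - 2), 2 * pPowerSeries k d})),
      Function.Injective ι ∧ Function.Surjective π := by
  classical
  set n : ℕ := 2 ^ (d - 1) with hn
  set c : ℕ := 2 ^ (d - 2) with hc
  -- the W-polynomial m_W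
  set mW : Polynomial W := (GrpAux.mZ d).map (Int.castRingHom W) with hmW
  set B := Polynomial W ⧸ Ideal.span {mW} with hB
  -- dihedral group embedding of the cyclic group algebra
  have hρinj : Function.Injective (fun g : Multiplicative (ZMod n) => DihedralGroup.r g.toAdd) := by
    intro a b hab
    simpa using hab
  set ρ : Multiplicative (ZMod n) →* DihedralGroup n :=
    { toFun := fun g => DihedralGroup.r g.toAdd
      map_one' := rfl
      map_mul' := fun a b => (DihedralGroup.r_mul_r _ _).symm } with hρ
  set ψ : MonoidAlgebra W (Multiplicative (ZMod n)) →ₐ[W] MonoidAlgebra W (DihedralGroup n) :=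
    MonoidAlgebra.mapDomainAlgHom W W ρ with hψ
  have hψinj : Function.Injective ψ := fun x y h => MonoidAlgebra.mapDomain_injective (R := W) hρinj h
  set xD : MonoidAlgebra W (DihedralGroup n) := ψ (GrpAux.xElt W n) with hxD
  set Φ : Polynomial W →ₐ[W] MonoidAlgebra W (DihedralGroup n) := Polynomial.aeval xD with hΦ
  have haevalmW : Polynomial.aeval (GrpAux.xElt W n) mW = 0 := by
    rw [hmW, ← algebraMap_int_eq, aeval_map_algebraMap]
    exact GrpAux.aeval_mZ_zero W d hd
  have hΦmW : Φ mW = 0 := by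
    rw [hΦ, hxD]
    rw [Polynomial.aeval_algHom_apply ψ (GrpAux.xElt W n) mW, haevalmW, map_zero]
  -- the injection ι
  have hvanishΦ : ∀ a ∈ Ideal.span {mW}, Φ a = 0 := by
    intro a ha
    obtain ⟨b, hb⟩ := Ideal.mem_span_singleton'.mp ha
    rw [← hb, map_mul, hΦmW, mul_zero]
  set ι : B →ₐ[W] MonoidAlgebra W (DihedralGroup n) :=
    Ideal.Quotient.liftₐ (Ideal.span {mW}) Φ hvanishΦ with hι
  have hιinj : Function.Injective ι := by
    rw [injective_iff_map_eq_zero]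
    intro a ha
    obtain ⟨g, rfl⟩ := Ideal.Quotient.mkₐ_surjective W (Ideal.span {mW}) a
    have hval : Φ g = 0 := by
      have := AlgHom.congr_fun (Ideal.Quotient.liftₐ_comp (Ideal.span {mW}) Φ hvanishΦ) g
      rw [← this]
      exact ha
    -- pull back along ψ
    have hxg : Polynomial.aeval (GrpAux.xElt W n) g = 0 := by
      apply hψinj
      rw [map_zero]
      have := Polynomial.aeval_algHom_apply ψ (GrpAux.xElt W n) g
      rw [← hxD] at this
      rw [← this]
      exact hval
    -- kernel lemma over the algebraic closure of the fraction field
    haveI : IsDomain W := by infer_instance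
    haveI : CharZero W := wittCharZero
    set F := FractionRing W
    set K := AlgebraicClosure F
    haveI : CharZero F := charZero_of_injective_algebraMap (IsFractionRing.injective W F)
    haveI : CharZero K := charZero_of_injective_algebraMap (algebraMap F K).injective
    set φ : W →+* K := (algebraMap F K).comp (algebraMap W F) with hφdef
    have hφ : Function.Injective φ := (algebraMap F K).injective.comp (IsFractionRing.injective W F)
    have hdvd := GrpAux.dvd_of_aeval_eq_zero φ hφ d hd g hxg
    rw [Ideal.Quotient.mkₐ_eq_mk, Ideal.Quotient.eq_zero_iff_mem]
    exact Ideal.mem_span_singleton.mpr hdvd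
  -- the surjection π
  set I : Ideal (PowerSeries W) :=
    Ideal.span {pPowerSeries k d * (PowerSeries.X - 2), 2 * pPowerSeries k d} with hI
  set T : PowerSeries W ⧸ I := Ideal.Quotient.mkₐ W I PowerSeries.X with hT
  set Γ : Polynomial W →ₐ[W] (PowerSeries W ⧸ I) := Polynomial.aeval T with hΓ
  have hthetam : Polynomial.aeval (PowerSeries.X : PowerSeries W) (GrpAux.mZ d)
      = ((PowerSeries.X : PowerSeries W)^2 - 4) * pPowerSeries k d := by
    rw [GrpAux.mZ, map_mul]
    congr 1
    rw [map_sub, map_pow, aeval_X, aeval_C]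
    norm_num
  have haevalXmW : Polynomial.aeval (PowerSeries.X : PowerSeries W) mW
      = ((PowerSeries.X : PowerSeries W)^2 - 4) * pPowerSeries k d := by
    rw [hmW, ← algebraMap_int_eq, aeval_map_algebraMap]
    exact hthetam
  have hΓmW : Γ mW = 0 := by
    rw [hΓ, hT]
    rw [Polynomial.aeval_algHom_apply (Ideal.Quotient.mkₐ W I) (PowerSeries.X : PowerSeries W) mW,
      haevalXmW]
    show Ideal.Quotient.mk I _ = 0
    rw [Ideal.Quotient.eq_zero_iff_mem]
    apply Ideal.mem_span_pair.mpr
    exact ⟨PowerSeries.X + 2, 0, by ring⟩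
  have hvanishΓ : ∀ a ∈ Ideal.span {mW}, Γ a = 0 := by
    intro a ha
    obtain ⟨b, hb⟩ := Ideal.mem_span_singleton'.mp ha
    rw [← hb, map_mul, hΓmW, mul_zero]
  set π : B →ₐ[W] (PowerSeries W ⧸ I) :=
    Ideal.Quotient.liftₐ (Ideal.span {mW}) Γ hvanishΓ with hπ
  have hπsurj : Function.Surjective π := by
    intro y
    obtain ⟨G, rfl⟩ := Ideal.Quotient.mk_surjective y
    -- division data
    obtain ⟨wZ, hwZ, _⟩ := PSAux.fZ_eq d hd
    set wps : PowerSeries W := Polynomial.aeval (PowerSeries.X : PowerSeries W) wZ with hwps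
    set Fser : PowerSeries W := PowerSeries.X * pPowerSeries k d with hFser
    have hF : Fser = PowerSeries.X ^ c + 2 * wps := by
      have := congrArg (Polynomial.aeval (PowerSeries.X : PowerSeries W)) hwZ
      rw [map_mul, map_add, map_pow, aeval_X, map_mul] at this
      rw [hFser, hwps, pPowerSeries]
      rw [this]
      congr 1
      rw [map_ofNat]
    have hcpos : 0 < c := by positivity
    obtain ⟨PL, QL, hPL⟩ := PSAux.exists_div c hcpos wps Fser hF G
    have hFmem : Fser ∈ I := by
      rw [hI]
      apply Ideal.mem_span_pair.mpr
      exact ⟨1, 1, by rw [hFser]; ring⟩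
    refine ⟨Ideal.Quotient.mkₐ W (Ideal.span {mW}) PL, ?_⟩
    have hπval : π (Ideal.Quotient.mkₐ W (Ideal.span {mW}) PL) = Γ PL :=
      AlgHom.congr_fun (Ideal.Quotient.liftₐ_comp (Ideal.span {mW}) Γ hvanishΓ) PL
    rw [hπval, hΓ]
    have hGamma : (Polynomial.aeval T) PL = Ideal.Quotient.mk I (PSAux.theta (k := k) PL) := by
      rw [hT, Polynomial.aeval_algHom_apply (Ideal.Quotient.mkₐ W I)
        (PowerSeries.X : PowerSeries W) PL]
      rfl
    rw [hGamma, hPL]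
    rw [map_add]
    have : Ideal.Quotient.mk I (QL * Fser) = 0 := by
      rw [Ideal.Quotient.eq_zero_iff_mem]
      exact Ideal.mul_mem_left I QL hFmem
    rw [this, add_zero]
  exact ⟨B, inferInstance, inferInstance, ι, π, hιinj, hπsurj⟩

end Main

/-- Let `k` be an algebraically closed field of characteristic `2`, `W = W(k)`.
For `d ≥ 3` and `D` the dihedral group of order `2^d`, the `W`-algebra
`W[[t]]/(p_d(t)(t − 2), 2·p_d(t))` is isomorphic to a subquotient algebra of the group
algebra `WD`: there is a `W`-algebra `B` admitting an injective `W`-algebra homomorphism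
into `WD` (i.e. `B` is a `W`-subalgebra `S` of `WD`) and a surjective `W`-algebra
homomorphism onto `W[[t]]/(p_d(t)(t − 2), 2·p_d(t))` (whose kernel is an ideal `J` of `S`,
realizing the latter ring as `S/J`). -/
theorem Rd_is_subquotient_of_dihedral_group_algebra
    {k : Type u} [Field k] [IsAlgClosed k] [CharP k 2] (d : ℕ) (hd : 3 ≤ d) :
    ∃ (B : Type u) (_ : Ring B) (_ : Algebra (WittVector 2 k) B)
      (ι : B →ₐ[WittVector 2 k]
        MonoidAlgebra (WittVector 2 k) (DihedralGroup (2 ^ (d - 1))))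
      (π : B →ₐ[WittVector 2 k]
        (PowerSeries (WittVector 2 k) ⧸
          Ideal.span {pPowerSeries k d * (PowerSeries.X - 2), 2 * pPowerSeries k d})),
      Function.Injective ι ∧ Function.Surjective π := by
  exact Rd_is_subquotient_of_dihedral_group_algebra' d hd
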